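/- For every dimension d ≥ 1, X_d X_d^T = ((d+1)/d) · I_{d+1} − (1/d) · 𝟙_{d+1} 𝟙_{d+1}^T ∈ ℝ^{(d+1)×(d+1)}, where 𝟙_{d+1} is the all-ones vector. -/

import Mathlib

open Matrix

/-- The recursively defined matrix `X_d ∈ ℝ^{(d+1)×d}` whose rows are the vertices of a
regular simplex inscribed in the unit sphere of `ℝ^d`:  `X_1 = (-1; 1)`, and for `d > 1`,
the top-left `d × (d-1)` block of `X_d` is `R_d • X_{d-1}` with `R_d = √(d²-1)/d`, the last
column has its first `d` entries equal to `-1/d` and last entry `1`, and the last row is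
`(0, …, 0, 1)`. -/
noncomputable def simplexPts : (d : ℕ) → Matrix (Fin (d + 1)) (Fin d) ℝ
  | 0 => fun _ j => j.elim0
  | 1 => fun i _ => if (i : ℕ) = 0 then -1 else 1
  | (d + 2) => fun i j =>
      if hj : (j : ℕ) < d + 1 then
        if hi : (i : ℕ) < d + 2 then
          (Real.sqrt (((d : ℝ) + 2) ^ 2 - 1) / ((d : ℝ) + 2)) *
            simplexPts (d + 1) ⟨i, hi⟩ ⟨j, hj⟩
        else 0
      else if (i : ℕ) < d + 2 then -1 / ((d : ℝ) + 2) else 1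

/-- for every `d ≥ 1`,
`X_d X_dᵀ = ((d+1)/d) I_{d+1} - (1/d) 𝟙_{d+1} 𝟙_{d+1}ᵀ`. -/
theorem simplexPts_mul_transpose (d : ℕ) (hd : 1 ≤ d) :
    simplexPts d * (simplexPts d)ᵀ =
      (((d : ℝ) + 1) / (d : ℝ)) • (1 : Matrix (Fin (d + 1)) (Fin (d + 1)) ℝ) -
        ((1 : ℝ) / (d : ℝ)) • Matrix.of (fun _ _ : Fin (d + 1) => (1 : ℝ)) := by
  
  induction d with
  | zero => omega
  | succ n ih =>
    cases n with
    | zero =>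
      ext i k
      simp only [Matrix.mul_apply, Matrix.transpose_apply]
      fin_cases i <;> fin_cases k <;>
        simp [Matrix.mul_apply, simplexPts, Fin.sum_univ_two, Matrix.one_apply, Matrix.transpose_apply]
    | succ m =>
      have hih := ih (by omega)
      have hm2 : ((m : ℝ) + 2) ≠ 0 := by positivity
      have hm0 : (0 : ℝ) ≤ (m : ℝ) := Nat.cast_nonneg m
      have hsq : Real.sqrt (((m : ℝ) + 2) ^ 2 - 1) ^ 2 = ((m : ℝ) + 2) ^ 2 - 1 := by
        rw [Real.sq_sqrt]; nlinarith
      ext i k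
      rw [Matrix.mul_apply]
      simp only [Matrix.transpose_apply]
      rw [Fin.sum_univ_castSucc]
      induction i using Fin.lastCases with
      | last =>
        induction k using Fin.lastCases with
        | last =>
          simp [simplexPts, Matrix.one_apply, Fin.is_le]
          field_simp
          ring
        | cast k =>
          have hk : ((k.castSucc : Fin (m+3)) : ℕ) < m + 2 := k.is_lt
          simp [simplexPts, hk, Matrix.one_apply, (Fin.castSucc_lt_last k).ne', Fin.is_le]
          ring
      | cast i =>
        have hi : ((i.castSucc : Fin (m+3)) : ℕ) < m + 2 := i.is_lt
        induction k using Fin.lastCases with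
        | last =>
          simp [simplexPts, hi, Matrix.one_apply, (Fin.castSucc_lt_last i).ne, Fin.is_le]
          ring
        | cast k =>
          have hk : ((k.castSucc : Fin (m+3)) : ℕ) < m + 2 := k.is_lt
          have key : ∀ j : Fin (m + 1),
              simplexPts (m + 2) i.castSucc j.castSucc * simplexPts (m + 2) k.castSucc j.castSucc
              = (Real.sqrt (((m : ℝ) + 2) ^ 2 - 1) / ((m : ℝ) + 2)) ^ 2 *
                (simplexPts (m + 1) i j * simplexPts (m + 1) k j) := by
            intro j
            have hj : ((j.castSucc : Fin (m+2)) : ℕ) < m + 1 := j.is_lt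
            simp only [simplexPts]
            rw [dif_pos hj, dif_pos hi, dif_pos hj, dif_pos hk]
            simp only [Fin.coe_castSucc, Fin.eta]
            ring
          rw [Finset.sum_congr rfl (fun j _ => key j), ← Finset.mul_sum]
          have hsum : ∑ j : Fin (m + 1), simplexPts (m + 1) i j * simplexPts (m + 1) k j
              = (simplexPts (m + 1) * (simplexPts (m + 1))ᵀ) i k := by
            rw [Matrix.mul_apply]; simp [Matrix.transpose_apply]
          rw [hsum, hih]
          have hlast : ¬ ((Fin.last (m+1) : Fin (m+2)) : ℕ) < m + 1 := by simp
          simp only [simplexPts, hi, hk, hlast, dif_neg, if_pos, Matrix.sub_apply,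
            Matrix.smul_apply, Matrix.one_apply, Matrix.of_apply, smul_eq_mul,
            Fin.castSucc_inj, Nat.cast_add, Nat.cast_one]
          by_cases h : i = k <;> simp [h] <;> push_cast <;> field_simp <;> rw [hsq] <;> ring
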